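/- Let X and Y be symmetric real n × n matrices whose second smallest eigenvalues λ₂(X), λ₂(Y) are simple and at distance at least δ > 0 from all other eigenvalues of X and Y respectively. Let x and y be unit eigenvectors corresponding to λ₂(X) and λ₂(Y). Then min over β ∈ {±1} of ‖x + βy‖ is at most 2‖X − Y‖/δ. -/

import Mathlib

noncomputable def e2 {n : ℕ} (v : Fin n → ℝ) : ℝ := Real.sqrt (∑ i, (v i)^2)

/-- The ℓ²→ℓ² operator norm of a matrix. -/
noncomputable def opNorm {k m : ℕ} (B : Matrix (Fin k) (Fin m) ℝ) : ℝ :=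
  sSup {c : ℝ | ∃ x : Fin m → ℝ, e2 x ≤ 1 ∧ c = e2 (B.mulVec x)}

/-- The ℓ∞→ℓ² operator norm of a matrix. -/
noncomputable def normInfTwo {k m : ℕ} (B : Matrix (Fin k) (Fin m) ℝ) : ℝ :=
  sSup {c : ℝ | ∃ x : Fin m → ℝ, (∀ j, |x j| ≤ 1) ∧ c = e2 (B.mulVec x)}

section DKaux
open Matrix Finset

lemma e2_nonneg {n : ℕ} (v : Fin n → ℝ) : 0 ≤ e2 v := Real.sqrt_nonneg _

lemma e2_sq {n : ℕ} (v : Fin n → ℝ) : (e2 v)^2 = ∑ i, (v i)^2 := by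
  rw [e2, Real.sq_sqrt]; positivity

lemma e2_sum_eq {n : ℕ} {v : Fin n → ℝ} (h : e2 v = 1) : ∑ i, (v i)^2 = 1 := by
  rw [← e2_sq, h]; norm_num

lemma opNorm_bddAbove {k m : ℕ} (B : Matrix (Fin k) (Fin m) ℝ) :
    BddAbove {c : ℝ | ∃ x : Fin m → ℝ, e2 x ≤ 1 ∧ c = e2 (B.mulVec x)} := by
  refine ⟨Real.sqrt (∑ i, ∑ j, (B i j)^2), ?_⟩
  rintro c ⟨w, hw, rfl⟩
  rw [e2]
  apply Real.sqrt_le_sqrt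
  have hw2 : ∑ j, (w j)^2 ≤ 1 := by
    have h := e2_sq w
    nlinarith [e2_nonneg w]
  apply Finset.sum_le_sum
  intro i _
  have hcs := Finset.sum_mul_sq_le_sq_mul_sq Finset.univ (fun j => B i j) w
  have hdef : B.mulVec w i = ∑ j, B i j * w j := rfl
  rw [hdef]
  calc (∑ j, B i j * w j)^2 ≤ (∑ j, (B i j)^2) * (∑ j, (w j)^2) := hcs
    _ ≤ (∑ j, (B i j)^2) * 1 := by
        apply mul_le_mul_of_nonneg_left hw2 (by positivity)
    _ = ∑ j, (B i j)^2 := mul_one _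

lemma e2_mulVec_le {k m : ℕ} (B : Matrix (Fin k) (Fin m) ℝ) (v : Fin m → ℝ)
    (hv : e2 v ≤ 1) : e2 (B.mulVec v) ≤ opNorm B :=
  le_csSup (opNorm_bddAbove B) ⟨v, hv, rfl⟩

lemma opNorm_nonneg' {k m : ℕ} (B : Matrix (Fin k) (Fin m) ℝ) : 0 ≤ opNorm B := by
  have h : e2 (0 : Fin m → ℝ) ≤ 1 := by simp [e2]
  exact le_trans (e2_nonneg _) (e2_mulVec_le B 0 h)

lemma opNorm_sub_symm {k m : ℕ} (A B : Matrix (Fin k) (Fin m) ℝ) :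
    opNorm (B - A) = opNorm (A - B) := by
  unfold opNorm
  congr 1
  ext c
  constructor <;> rintro ⟨w, h1, rfl⟩ <;> refine ⟨w, h1, ?_⟩ <;>
  · rw [show (B - A) = -(A - B) from (neg_sub A B).symm] <;>
    rw [Matrix.neg_mulVec]
    · unfold e2; congr 1; apply Finset.sum_congr rfl; intro i _; simp [Pi.neg_apply]

lemma parseval {n : ℕ} (P : Matrix (Fin n) (Fin n) ℝ) (hP : P * Pᵀ = 1)
    (u v : Fin n → ℝ) : (Pᵀ.mulVec u) ⬝ᵥ (Pᵀ.mulVec v) = u ⬝ᵥ v := by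
  rw [Matrix.mulVec_transpose P u, Matrix.dotProduct_mulVec, Matrix.vecMul_vecMul, hP,
    Matrix.vecMul_one]

lemma sum_sq_coords {n : ℕ} (P : Matrix (Fin n) (Fin n) ℝ) (hP : P * Pᵀ = 1)
    (u : Fin n → ℝ) : ∑ i, ((Pᵀ.mulVec u) i)^2 = ∑ k, (u k)^2 := by
  have h := parseval P hP u u
  simpa [dotProduct, pow_two] using h

lemma eig_coords {n : ℕ} (P X : Matrix (Fin n) (Fin n) ℝ) (μ : Fin n → ℝ)
    (hP : P * Pᵀ = 1) (hX : X = P * Matrix.diagonal μ * Pᵀ) (v : Fin n → ℝ) :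
    Pᵀ.mulVec (X.mulVec v) = fun i => μ i * (Pᵀ.mulVec v) i := by
  have hP' : Pᵀ * P = 1 := mul_eq_one_comm.mp hP
  rw [hX, Matrix.mulVec_mulVec]
  have h : Pᵀ * (P * Matrix.diagonal μ * Pᵀ) = Matrix.diagonal μ * Pᵀ := by
    rw [Matrix.mul_assoc, ← Matrix.mul_assoc, ← Matrix.mul_assoc, hP', Matrix.one_mul]
  rw [h, ← Matrix.mulVec_mulVec]
  funext i
  exact Matrix.mulVec_diagonal μ (Pᵀ.mulVec v) i

lemma filtered_bound {n : ℕ} (X Y P : Matrix (Fin n) (Fin n) ℝ) (μ : Fin n → ℝ)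
    (hP : P * Pᵀ = 1) (hX : X = P * Matrix.diagonal μ * Pᵀ)
    (δ ν0 : ℝ) (hδ : 0 < δ) (v : Fin n → ℝ) (hv : Y.mulVec v = ν0 • v)
    (hvn : e2 v ≤ 1) (S : Finset (Fin n)) (hS : ∀ i ∈ S, δ ≤ μ i - ν0) :
    ∑ i ∈ S, ((Pᵀ.mulVec v) i)^2 ≤ (opNorm (X - Y))^2 / δ^2 := by
  set c := Pᵀ.mulVec v with hc
  set e := (X - Y).mulVec v with he
  have hed : Pᵀ.mulVec e = fun i => (μ i - ν0) * c i := by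
    rw [he, Matrix.sub_mulVec, Matrix.mulVec_sub, hv, eig_coords P X μ hP hX v,
      Matrix.mulVec_smul]
    funext i
    simp only [Pi.sub_apply, Pi.smul_apply, smul_eq_mul]
    ring
  have h1 : δ^2 * ∑ i ∈ S, (c i)^2 ≤ ∑ i ∈ S, ((μ i - ν0) * c i)^2 := by
    rw [Finset.mul_sum]
    apply Finset.sum_le_sum
    intro i hi
    have h := hS i hi
    have h9 : δ^2 ≤ (μ i - ν0)^2 := by nlinarith
    calc δ^2 * (c i)^2 ≤ (μ i - ν0)^2 * (c i)^2 :=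
        mul_le_mul_of_nonneg_right h9 (sq_nonneg _)
      _ = ((μ i - ν0) * c i)^2 := by ring
  have h2 : ∑ i ∈ S, ((μ i - ν0) * c i)^2 ≤ ∑ i, ((μ i - ν0) * c i)^2 :=
    Finset.sum_le_sum_of_subset_of_nonneg (Finset.subset_univ S) (fun i _ _ => sq_nonneg _)
  have h3 : ∑ i, ((μ i - ν0) * c i)^2 = ∑ k, (e k)^2 := by
    have h := sum_sq_coords P hP e
    rw [hed] at h
    simpa using h
  have h4 : ∑ k, (e k)^2 ≤ (opNorm (X - Y))^2 := by
    have h5 := e2_mulVec_le (X - Y) v hvn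
    have h6 := e2_sq e
    have h7 := e2_nonneg e
    rw [← he] at h5
    nlinarith
  rw [le_div_iff₀ (by positivity)]
  nlinarith

end DKaux

section DKkey
open Matrix Finset

set_option maxHeartbeats 2000000 in
theorem dk_key (n : ℕ) (hn : 2 ≤ n) (X Y P Q : Matrix (Fin n) (Fin n) ℝ)
    (μ ν : Fin n → ℝ) (δ : ℝ) (hδ : 0 < δ)
    (hP : P * Pᵀ = 1) (hQ : Q * Qᵀ = 1)
    (hX : X = P * Matrix.diagonal μ * Pᵀ)
    (hY : Y = Q * Matrix.diagonal ν * Qᵀ)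
    (hμmono : Monotone μ)
    (hμgap1 : μ ⟨0, lt_of_lt_of_le (by norm_num) hn⟩ ≤ μ ⟨1, lt_of_lt_of_le (by norm_num) hn⟩ - δ)
    (hμgap2 : ∀ i : Fin n, 2 ≤ (i : ℕ) → μ ⟨1, lt_of_lt_of_le (by norm_num) hn⟩ + δ ≤ μ i)
    (hνgap1 : ν ⟨0, lt_of_lt_of_le (by norm_num) hn⟩ ≤ ν ⟨1, lt_of_lt_of_le (by norm_num) hn⟩ - δ)
    (x y : Fin n → ℝ)
    (hx : X.mulVec x = μ ⟨1, lt_of_lt_of_le (by norm_num) hn⟩ • x) (hxnorm : e2 x = 1)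
    (hy : Y.mulVec y = ν ⟨1, lt_of_lt_of_le (by norm_num) hn⟩ • y) (hynorm : e2 y = 1)
    (hle : ν ⟨1, lt_of_lt_of_le (by norm_num) hn⟩ ≤ μ ⟨1, lt_of_lt_of_le (by norm_num) hn⟩) :
    min (e2 (x + y)) (e2 (x - y)) ≤ 2 * opNorm (X - Y) / δ := by
  set i0 : Fin n := ⟨0, lt_of_lt_of_le (by norm_num) hn⟩ with hi0def
  set i1 : Fin n := ⟨1, lt_of_lt_of_le (by norm_num) hn⟩ with hi1def
  set E := opNorm (X - Y) with hEdef
  have hE0 : 0 ≤ E := opNorm_nonneg' _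
  have hQ' : Qᵀ * Q = 1 := mul_eq_one_comm.mp hQ
  have hP' : Pᵀ * P = 1 := mul_eq_one_comm.mp hP
  -- bottom eigenvector of Y
  set q0 : Fin n → ℝ := Q.mulVec (Pi.single i0 1) with hq0def
  have hDsingle : ∀ (κ : Fin n → ℝ), (Matrix.diagonal κ).mulVec (Pi.single i0 (1:ℝ))
      = κ i0 • (Pi.single i0 (1:ℝ) : Fin n → ℝ) := by
    intro κ
    funext j
    rw [Matrix.mulVec_diagonal]
    by_cases h : j = i0
    · subst h; simp
    · simp [Pi.single_eq_of_ne h]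
  have hq0eig : Y.mulVec q0 = ν i0 • q0 := by
    rw [hq0def, Matrix.mulVec_mulVec, hY]
    have h : Q * Matrix.diagonal ν * Qᵀ * Q = Q * Matrix.diagonal ν := by
      rw [Matrix.mul_assoc, hQ', Matrix.mul_one]
    rw [h, ← Matrix.mulVec_mulVec, hDsingle, Matrix.mulVec_smul]
  have hq0sum : ∑ k, (q0 k)^2 = 1 := by
    have hpar := parseval (Qᵀ) (by rw [Matrix.transpose_transpose]; exact hQ')
      (Pi.single i0 1) (Pi.single i0 1)
    rw [Matrix.transpose_transpose] at hpar
    rw [← hq0def] at hpar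
    have h2 : (Pi.single i0 (1:ℝ)) ⬝ᵥ (Pi.single i0 1) = 1 := by
      rw [dotProduct_single]; simp
    rw [h2] at hpar
    simpa [dotProduct, pow_two] using hpar
  have hq0n : e2 q0 = 1 := by rw [e2, hq0sum, Real.sqrt_one]
  -- coordinate vectors in the P basis
  set cy := Pᵀ.mulVec y with hcydef
  set c0 := Pᵀ.mulVec q0 with hc0def
  set ξ := Pᵀ.mulVec x with hξdef
  -- two spectral bounds
  have A1 : ∑ i ∈ univ.filter (fun i => i ≠ i0), (c0 i)^2 ≤ E^2/δ^2 := by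
    rw [hc0def, hEdef]
    apply filtered_bound X Y P μ hP hX δ (ν i0) hδ q0 hq0eig (le_of_eq hq0n)
    intro i hi
    simp only [Finset.mem_filter] at hi
    have h1 : i1 ≤ i := by
      have h : (i : ℕ) ≠ 0 := fun h => hi.2 (Fin.ext h)
      show (i1 : ℕ) ≤ (i : ℕ)
      simp only [hi1def]
      omega
    have h2 : μ i1 ≤ μ i := hμmono h1
    linarith
  have A2 : ∑ i ∈ univ.filter (fun i : Fin n => 2 ≤ (i : ℕ)), (cy i)^2 ≤ E^2/δ^2 := by
    rw [hcydef, hEdef]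
    apply filtered_bound X Y P μ hP hX δ (ν i1) hδ y hy (le_of_eq hynorm)
    intro i hi
    simp only [Finset.mem_filter] at hi
    have h := hμgap2 i hi.2
    linarith
  -- Parseval identities
  have hysum : ∑ k, (y k)^2 = 1 := e2_sum_eq hynorm
  have hxsum : ∑ k, (x k)^2 = 1 := e2_sum_eq hxnorm
  have hcysum : ∑ i, (cy i)^2 = 1 := by
    rw [hcydef, sum_sq_coords P hP y]; exact hysum
  have hc0sum : ∑ i, (c0 i)^2 = 1 := by
    rw [hc0def, sum_sq_coords P hP q0]; exact hq0sum
  have hξsum : ∑ i, (ξ i)^2 = 1 := by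
    rw [hξdef, sum_sq_coords P hP x]; exact hxsum
  -- ξ is supported at i1
  have hξ0 : ∀ i, i ≠ i1 → ξ i = 0 := by
    intro i hi
    have hξeq : (fun i => μ i * ξ i) = μ i1 • ξ := by
      rw [hξdef, ← eig_coords P X μ hP hX x, hx, Matrix.mulVec_smul]
    have h1 : μ i * ξ i = μ i1 * ξ i := by
      have h := congrFun hξeq i
      simpa [Pi.smul_apply, smul_eq_mul] using h
    have h2 : μ i ≠ μ i1 := by
      by_cases h : (i : ℕ) = 0
      · have hii : i = i0 := Fin.ext h
        subst hii
        intro heq; rw [heq] at hμgap1; linarith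
      · have hne1 : (i : ℕ) ≠ 1 := fun hh => hi (Fin.ext hh)
        have h22 : 2 ≤ (i : ℕ) := by omega
        have := hμgap2 i h22
        intro heq; linarith
    have h3 : (μ i - μ i1) * ξ i = 0 := by rw [sub_mul, h1, sub_self]
    rcases mul_eq_zero.mp h3 with h | h
    · exact absurd (by linarith : μ i = μ i1) h2
    · exact h
  have hξ1 : (ξ i1)^2 = 1 := by
    rw [← hξsum]
    symm
    apply Finset.sum_eq_single i1
    · intro i _ hne; rw [hξ0 i hne]; ring
    · intro h; exact absurd (Finset.mem_univ i1) h
  have hdots : x ⬝ᵥ y = ξ i1 * cy i1 := by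
    rw [← parseval P hP x y, ← hξdef, ← hcydef, dotProduct]
    apply Finset.sum_eq_single i1
    · intro i _ hne; rw [hξ0 i hne, zero_mul]
    · intro h; exact absurd (Finset.mem_univ i1) h
  have hxy_sq : (x ⬝ᵥ y)^2 = (cy i1)^2 := by
    rw [hdots, mul_pow, hξ1, one_mul]
  -- y is orthogonal to q0
  have hyq0 : y ⬝ᵥ q0 = 0 := by
    set η := Qᵀ.mulVec y with hηdef
    have hηeq : (fun j => ν j * η j) = ν i1 • η := by
      rw [hηdef, ← eig_coords Q Y ν hQ hY y, hy, Matrix.mulVec_smul]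
    have hη0 : η i0 = 0 := by
      have h1 : ν i0 * η i0 = ν i1 * η i0 := by
        have h := congrFun hηeq i0
        simpa [Pi.smul_apply, smul_eq_mul] using h
      have h3 : (ν i0 - ν i1) * η i0 = 0 := by rw [sub_mul, h1, sub_self]
      rcases mul_eq_zero.mp h3 with h | h
      · exfalso; have : ν i0 = ν i1 := by linarith
        rw [this] at hνgap1; linarith
      · exact h
    have h2 : Qᵀ.mulVec q0 = Pi.single i0 1 := by
      rw [hq0def, Matrix.mulVec_mulVec, hQ', Matrix.one_mulVec]
    calc y ⬝ᵥ q0 = (Qᵀ.mulVec y) ⬝ᵥ (Qᵀ.mulVec q0) := (parseval Q hQ y q0).symm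
      _ = η ⬝ᵥ Pi.single i0 1 := by rw [← hηdef, h2]
      _ = η i0 * 1 := dotProduct_single _ _ _
      _ = 0 := by rw [hη0, zero_mul]
  -- Bessel inequality with the pair (y, q0) against p0
  set p0 : Fin n → ℝ := P.mulVec (Pi.single i0 1) with hp0def
  have hp0sum : ∑ k, (p0 k)^2 = 1 := by
    have hpar := parseval (Pᵀ) (by rw [Matrix.transpose_transpose]; exact hP')
      (Pi.single i0 1) (Pi.single i0 1)
    rw [Matrix.transpose_transpose] at hpar
    rw [← hp0def] at hpar
    have h2 : (Pi.single i0 (1:ℝ)) ⬝ᵥ (Pi.single i0 1) = 1 := by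
      rw [dotProduct_single]; simp
    rw [h2] at hpar
    simpa [dotProduct, pow_two] using hpar
  have hcy0 : cy i0 = p0 ⬝ᵥ y := by
    rw [hcydef, hp0def]
    simp only [Matrix.mulVec, dotProduct, Matrix.transpose_apply, Pi.single_apply]
    apply Finset.sum_congr rfl
    intro k _
    congr 1
    rw [Finset.sum_eq_single i0]
    · simp
    · intro j _ hne; simp [hne]
    · intro h; exact absurd (Finset.mem_univ i0) h
  have hc00 : c0 i0 = p0 ⬝ᵥ q0 := by
    rw [hc0def, hp0def]
    simp only [Matrix.mulVec, dotProduct, Matrix.transpose_apply, Pi.single_apply]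
    apply Finset.sum_congr rfl
    intro k _
    congr 1
    rw [Finset.sum_eq_single i0]
    · simp
    · intro j _ hne; simp [hne]
    · intro h; exact absurd (Finset.mem_univ i0) h
  have hBessel : (p0 ⬝ᵥ y)^2 + (p0 ⬝ᵥ q0)^2 ≤ 1 := by
    set a := p0 ⬝ᵥ y with ha
    set b := p0 ⬝ᵥ q0 with hb
    have hnn : (0:ℝ) ≤ ∑ k, (p0 k - a * y k - b * q0 k)^2 :=
      Finset.sum_nonneg fun k _ => sq_nonneg _
    have key0 : ∑ k, (p0 k - a * y k - b * q0 k)^2 = 1 - a^2 - b^2 := by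
      have e1 : ∀ k, (p0 k - a * y k - b * q0 k)^2
          = (p0 k)^2 + a^2 * (y k)^2 + b^2 * (q0 k)^2
            - 2*a*(p0 k * y k) - 2*b*(p0 k * q0 k) + 2*a*b*(y k * q0 k) := by
        intro k; ring
      rw [Finset.sum_congr rfl fun k _ => e1 k]
      have hay : ∑ k, p0 k * y k = a := rfl
      have hbq : ∑ k, p0 k * q0 k = b := rfl
      have hyq : ∑ k, y k * q0 k = 0 := hyq0
      simp only [Finset.sum_add_distrib, Finset.sum_sub_distrib, ← Finset.mul_sum]
      rw [hp0sum, hysum, hq0sum, hay, hbq, hyq]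
      ring
    linarith
  -- assemble the bound on 1 - (x ⬝ᵥ y)^2
  have hsplitc0 : (c0 i0)^2 + ∑ i ∈ univ.filter (fun i => i ≠ i0), (c0 i)^2 = 1 := by
    rw [← hc0sum]
    have h := Finset.sum_filter_add_sum_filter_not Finset.univ (fun i => i = i0)
      (fun i => (c0 i)^2)
    rw [← h]
    congr 1
    rw [Finset.filter_eq' Finset.univ i0]
    simp
  have hbess2 : (cy i0)^2 ≤ ∑ i ∈ univ.filter (fun i => i ≠ i0), (c0 i)^2 := by
    rw [hcy0]
    have hh : (c0 i0)^2 = (p0 ⬝ᵥ q0)^2 := by rw [hc00]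
    nlinarith [hBessel]
  have hsplitcy : ∑ i ∈ univ.filter (fun i => i ≠ i1), (cy i)^2
      = (cy i0)^2 + ∑ i ∈ univ.filter (fun i : Fin n => 2 ≤ (i : ℕ)), (cy i)^2 := by
    have hset : univ.filter (fun i : Fin n => i ≠ i1)
        = insert i0 (univ.filter (fun i : Fin n => 2 ≤ (i : ℕ))) := by
      ext i
      simp only [Finset.mem_filter, Finset.mem_insert, Finset.mem_univ, true_and, ne_eq]
      rw [show (i = i1) ↔ ((i:ℕ) = 1) from ⟨fun h => by rw [h], fun h => Fin.ext h⟩,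
        show (i = i0) ↔ ((i:ℕ) = 0) from ⟨fun h => by rw [h], fun h => Fin.ext h⟩]
      omega
    have hi0not : i0 ∉ univ.filter (fun i : Fin n => 2 ≤ (i : ℕ)) := by
      simp only [Finset.mem_filter, Finset.mem_univ, true_and]
      intro h
      have : (i0 : ℕ) = 0 := rfl
      omega
    rw [hset, Finset.sum_insert hi0not]
  have hcy_split : (cy i1)^2 + ∑ i ∈ univ.filter (fun i => i ≠ i1), (cy i)^2 = 1 := by
    rw [← hcysum]
    have h := Finset.sum_filter_add_sum_filter_not Finset.univ (fun i => i = i1)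
      (fun i => (cy i)^2)
    rw [← h]
    congr 1
    rw [Finset.filter_eq' Finset.univ i1]
    simp
  have h1mc : 1 - (x ⬝ᵥ y)^2 ≤ 2 * (E^2/δ^2) := by
    rw [hxy_sq]
    have h1 : 1 - (cy i1)^2 = ∑ i ∈ univ.filter (fun i => i ≠ i1), (cy i)^2 := by
      linarith
    rw [h1, hsplitcy]
    have := A1
    have := A2
    linarith [hbess2]
  have hctop : (x ⬝ᵥ y)^2 ≤ 1 := by
    have h0 : (0:ℝ) ≤ ∑ i ∈ univ.filter (fun i => i ≠ i1), (cy i)^2 :=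
      Finset.sum_nonneg fun i _ => sq_nonneg _
    rw [hxy_sq]
    linarith
  -- norm expansion
  set cp := x ⬝ᵥ y with hcp
  have hsum_add : ∑ k, ((x + y) k)^2 = 2 + 2*cp := by
    have e1 : ∀ k, ((x + y) k)^2 = (x k)^2 + (y k)^2 + 2*(x k * y k) := by
      intro k; simp only [Pi.add_apply]; ring
    rw [Finset.sum_congr rfl fun k _ => e1 k]
    have hxyd : ∑ k, x k * y k = cp := rfl
    simp only [Finset.sum_add_distrib, ← Finset.mul_sum]
    rw [hxsum, hysum, hxyd]
    ring
  have hsum_sub : ∑ k, ((x - y) k)^2 = 2 - 2*cp := by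
    have e1 : ∀ k, ((x - y) k)^2 = (x k)^2 + (y k)^2 - 2*(x k * y k) := by
      intro k; simp only [Pi.sub_apply]; ring
    rw [Finset.sum_congr rfl fun k _ => e1 k]
    have hxyd : ∑ k, x k * y k = cp := rfl
    simp only [Finset.sum_add_distrib, Finset.sum_sub_distrib, ← Finset.mul_sum]
    rw [hxsum, hysum, hxyd]
    ring
  have h2Eδ : (0:ℝ) ≤ 2*E/δ := by positivity
  have hsq : (2*E/δ)^2 = 4*(E^2/δ^2) := by
    field_simp
    ring
  clear_value i0 i1 E q0 cy c0 ξ p0 cp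
  clear * - h1mc hctop hsum_add hsum_sub h2Eδ hsq hδ hE0
  rcases le_or_gt 0 cp with hc | hc
  · have hcple : cp ≤ 1 := by nlinarith [hctop, hc]
    have hprod : 0 ≤ cp * (1 - cp) := mul_nonneg hc (by linarith)
    apply le_trans (min_le_right _ _)
    rw [e2, hsum_sub]
    have hgoal : 2 - 2*cp ≤ (2*E/δ)^2 := by
      rw [hsq]
      nlinarith [h1mc, hprod]
    calc Real.sqrt (2 - 2*cp) ≤ Real.sqrt ((2*E/δ)^2) := Real.sqrt_le_sqrt hgoal
      _ = 2*E/δ := Real.sqrt_sq h2Eδ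
  · have hcpge : -1 ≤ cp := by nlinarith [hctop]
    have hprod : 0 ≤ (-cp) * (1 + cp) := mul_nonneg (by linarith) (by linarith)
    apply le_trans (min_le_left _ _)
    rw [e2, hsum_add]
    have hgoal : 2 + 2*cp ≤ (2*E/δ)^2 := by
      rw [hsq]
      nlinarith [h1mc, hprod]
    calc Real.sqrt (2 + 2*cp) ≤ Real.sqrt ((2*E/δ)^2) := Real.sqrt_le_sqrt hgoal
      _ = 2*E/δ := Real.sqrt_sq h2Eδ

end DKkey

open Matrix in
/-- Simple version of the Davis–Kahan theorem. The symmetric matrices `X` and `Y` are given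
through their orthogonal diagonalizations with sorted eigenvalue sequences `μ`, `ν`; the second
smallest eigenvalues `μ 1`, `ν 1` are simple and δ-separated from the rest of the spectrum. -/
theorem stmt10 (n : ℕ) (hn : 2 ≤ n) (X Y P Q : Matrix (Fin n) (Fin n) ℝ)
    (μ ν : Fin n → ℝ) (δ : ℝ) (hδ : 0 < δ)
    (hP : P * Pᵀ = 1) (hQ : Q * Qᵀ = 1)
    (hX : X = P * Matrix.diagonal μ * Pᵀ)
    (hY : Y = Q * Matrix.diagonal ν * Qᵀ)
    (hμmono : Monotone μ) (hνmono : Monotone ν)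
    (hμgap1 : μ ⟨0, by omega⟩ ≤ μ ⟨1, by omega⟩ - δ)
    (hμgap2 : ∀ i : Fin n, 2 ≤ (i : ℕ) → μ ⟨1, by omega⟩ + δ ≤ μ i)
    (hνgap1 : ν ⟨0, by omega⟩ ≤ ν ⟨1, by omega⟩ - δ)
    (hνgap2 : ∀ i : Fin n, 2 ≤ (i : ℕ) → ν ⟨1, by omega⟩ + δ ≤ ν i)
    (x y : Fin n → ℝ)
    (hx : X.mulVec x = μ ⟨1, by omega⟩ • x) (hxnorm : e2 x = 1)
    (hy : Y.mulVec y = ν ⟨1, by omega⟩ • y) (hynorm : e2 y = 1) :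
    min (e2 (x + y)) (e2 (x - y)) ≤ 2 * opNorm (X - Y) / δ := by
  rcases le_total (ν ⟨1, by omega⟩) (μ ⟨1, by omega⟩) with h | h
  · exact dk_key n hn X Y P Q μ ν δ hδ hP hQ hX hY hμmono hμgap1 hμgap2 hνgap1
      x y hx hxnorm hy hynorm h
  · have h2 := dk_key n hn Y X Q P ν μ δ hδ hQ hP hY hX hνmono hνgap1 hνgap2 hμgap1
      y x hy hynorm hx hxnorm h
    have e1 : e2 (y + x) = e2 (x + y) := by rw [add_comm]
    have e2' : e2 (y - x) = e2 (x - y) := by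
      unfold e2
      congr 1
      apply Finset.sum_congr rfl
      intro i _
      simp only [Pi.sub_apply]
      ring
    have e3 : opNorm (Y - X) = opNorm (X - Y) := opNorm_sub_symm X Y
    rw [e1, e2', e3] at h2
    exact h2
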